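/- Let n ≥ 1 and identify ℝ^{n²} with images indexed by (i,j), 1 ≤ i,j ≤ n. Let A be an n²×n² real matrix with nonnegative entries such that each row and each column of A has at least one positive entry, let b, y ∈ ℝ^{n²} with b ≥ 0 and y ≥ 0 componentwise, let β > 0 and δ > 0. Define J(x) = (1/2)‖Ax + b − y‖² + β Σ_{i,j=1}^n √(((𝒟x)_{i,j})₁² + ((𝒟x)_{i,j})₂² + δ²), where 𝒟 is the discrete gradient operator with periodic boundary conditions. Then J is nonnegative, strictly convex, and coercive on the nonnegative orthant {x ≥ 0}; consequently min_{x ≥ 0} J(x) has a unique solution. -/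

import Mathlib

open Real

lemma aux_cs (δ u v u' v' : ℝ) (hδ : 0 < δ) :
    u*u' + v*v' + δ^2 ≤ Real.sqrt (u^2+v^2+δ^2) * Real.sqrt (u'^2+v'^2+δ^2) := by
  set p := Real.sqrt (u^2+v^2+δ^2) with hp
  set q := Real.sqrt (u'^2+v'^2+δ^2) with hq
  have hp2 : p^2 = u^2+v^2+δ^2 := Real.sq_sqrt (by positivity)
  have hq2 : q^2 = u'^2+v'^2+δ^2 := Real.sq_sqrt (by positivity)
  have hp0 : 0 < p := Real.sqrt_pos.2 (by positivity)
  have hq0 : 0 < q := Real.sqrt_pos.2 (by positivity)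
  rcases le_or_gt (u*u' + v*v' + δ^2) 0 with h | h
  · nlinarith
  · nlinarith [sq_nonneg (u*v' - v*u'), sq_nonneg (u-u'), sq_nonneg (v-v'), mul_pos hp0 hq0]

lemma aux_cs_lt (δ u v u' v' : ℝ) (hδ : 0 < δ) (hne : u ≠ u' ∨ v ≠ v') :
    u*u' + v*v' + δ^2 < Real.sqrt (u^2+v^2+δ^2) * Real.sqrt (u'^2+v'^2+δ^2) := by
  set p := Real.sqrt (u^2+v^2+δ^2) with hp
  set q := Real.sqrt (u'^2+v'^2+δ^2) with hq
  have hp2 : p^2 = u^2+v^2+δ^2 := Real.sq_sqrt (by positivity)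
  have hq2 : q^2 = u'^2+v'^2+δ^2 := Real.sq_sqrt (by positivity)
  have hp0 : 0 < p := Real.sqrt_pos.2 (by positivity)
  have hq0 : 0 < q := Real.sqrt_pos.2 (by positivity)
  have hdd : 0 < (u-u')^2 + (v-v')^2 := by
    rcases hne with h | h
    · have h' : (u - u') ≠ 0 := sub_ne_zero.2 h
      nlinarith [sq_nonneg (v-v'), sq_pos_of_ne_zero h']
    · have h' : (v - v') ≠ 0 := sub_ne_zero.2 h
      nlinarith [sq_nonneg (u-u'), sq_pos_of_ne_zero h']
  rcases le_or_gt (u*u' + v*v' + δ^2) 0 with h | h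
  · nlinarith
  · nlinarith [sq_nonneg (u*v' - v*u'), mul_pos hp0 hq0, mul_pos hδ hδ]

lemma aux_sqrt_le (δ u v u' v' t s : ℝ) (hδ : 0 < δ) (ht : 0 ≤ t) (hs : 0 ≤ s) (hts : t + s = 1) :
    Real.sqrt ((t*u+s*u')^2 + (t*v+s*v')^2 + δ^2)
      ≤ t * Real.sqrt (u^2+v^2+δ^2) + s * Real.sqrt (u'^2+v'^2+δ^2) := by
  have key := aux_cs δ u v u' v' hδ
  set p := Real.sqrt (u^2+v^2+δ^2)
  set q := Real.sqrt (u'^2+v'^2+δ^2)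
  have hp2 : p^2 = u^2+v^2+δ^2 := Real.sq_sqrt (by positivity)
  have hq2 : q^2 = u'^2+v'^2+δ^2 := Real.sq_sqrt (by positivity)
  have hp0 : 0 < p := Real.sqrt_pos.2 (by positivity)
  have hq0 : 0 < q := Real.sqrt_pos.2 (by positivity)
  have hs' : s = 1 - t := by linarith
  subst hs'
  have hprod : 0 ≤ t * (1-t) * (p*q - (u*u' + v*v' + δ^2)) := by
    have : (0:ℝ) ≤ 1 - t := by linarith
    have := mul_nonneg ht this
    nlinarith
  have hrhs : 0 ≤ t * p + (1-t) * q := by nlinarith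
  have expand : (t*p+(1-t)*q)^2 - ((t*u+(1-t)*u')^2 + (t*v+(1-t)*v')^2 + δ^2)
      = 2*(t*(1-t)*(p*q - (u*u' + v*v' + δ^2))) := by
    linear_combination t^2 * hp2 + (1-t)^2 * hq2
  have hX : (t*u+(1-t)*u')^2 + (t*v+(1-t)*v')^2 + δ^2 ≤ (t*p+(1-t)*q)^2 := by linarith
  calc Real.sqrt ((t*u+(1-t)*u')^2 + (t*v+(1-t)*v')^2 + δ^2)
      ≤ Real.sqrt ((t*p+(1-t)*q)^2) := Real.sqrt_le_sqrt hX
    _ = t*p+(1-t)*q := Real.sqrt_sq hrhs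

lemma aux_sqrt_lt (δ u v u' v' t s : ℝ) (hδ : 0 < δ) (ht : 0 < t) (hs : 0 < s) (hts : t + s = 1)
    (hne : u ≠ u' ∨ v ≠ v') :
    Real.sqrt ((t*u+s*u')^2 + (t*v+s*v')^2 + δ^2)
      < t * Real.sqrt (u^2+v^2+δ^2) + s * Real.sqrt (u'^2+v'^2+δ^2) := by
  have key := aux_cs_lt δ u v u' v' hδ hne
  set p := Real.sqrt (u^2+v^2+δ^2)
  set q := Real.sqrt (u'^2+v'^2+δ^2)
  have hp2 : p^2 = u^2+v^2+δ^2 := Real.sq_sqrt (by positivity)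
  have hq2 : q^2 = u'^2+v'^2+δ^2 := Real.sq_sqrt (by positivity)
  have hp0 : 0 < p := Real.sqrt_pos.2 (by positivity)
  have hq0 : 0 < q := Real.sqrt_pos.2 (by positivity)
  have hrhs : 0 < t * p + s * q := by positivity
  have hs' : s = 1 - t := by linarith
  subst hs'
  have hprod : 0 < t * (1-t) * (p*q - (u*u' + v*v' + δ^2)) := by
    have h1 : (0:ℝ) < 1 - t := by linarith
    have := mul_pos ht h1
    nlinarith
  have expand : (t*p+(1-t)*q)^2 - ((t*u+(1-t)*u')^2 + (t*v+(1-t)*v')^2 + δ^2)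
      = 2*(t*(1-t)*(p*q - (u*u' + v*v' + δ^2))) := by
    linear_combination t^2 * hp2 + (1-t)^2 * hq2
  rw [Real.sqrt_lt' hrhs]
  linarith

lemma aux_combo {E : Type*} [NormedAddCommGroup E] [InnerProductSpace ℝ E]
    (u v : E) (t s : ℝ) (hts : t + s = 1) :
    ‖t • u + s • v‖ ^ 2 = t * ‖u‖ ^ 2 + s * ‖v‖ ^ 2 - t * s * ‖u - v‖ ^ 2 := by
  have hs' : s = 1 - t := by linarith
  subst hs'
  rw [← real_inner_self_eq_norm_sq, ← real_inner_self_eq_norm_sq,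
    ← real_inner_self_eq_norm_sq, ← real_inner_self_eq_norm_sq]
  simp only [inner_add_add_self, inner_sub_sub_self, real_inner_smul_left, real_inner_smul_right]
  ring

open Fin.NatCast in
lemma aux_const (n : ℕ) [NeZero n] (d : Fin n × Fin n → ℝ)
    (h1 : ∀ i j : Fin n, d (i+1, j) = d (i, j))
    (h2 : ∀ i j : Fin n, d (i, j+1) = d (i, j)) :
    ∀ p : Fin n × Fin n, d p = d (0, 0) := by
  have key1 : ∀ (k : ℕ) (j : Fin n), d ((k : Fin n), j) = d (0, j) := by
    intro k j
    induction k with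
    | zero => norm_num
    | succ m ih =>
      have : ((m+1 : ℕ) : Fin n) = (m : Fin n) + 1 := by push_cast; ring
      rw [this, h1, ih]
  have key2 : ∀ (k : ℕ), d (0, (k : Fin n)) = d (0, 0) := by
    intro k
    induction k with
    | zero => norm_num
    | succ m ih =>
      have : ((m+1 : ℕ) : Fin n) = (m : Fin n) + 1 := by push_cast; ring
      rw [this, h2, ih]
  intro ⟨i, j⟩
  calc d (i, j) = d ((↑(i : ℕ) : Fin n), j) := by rw [Fin.cast_val_eq_self]
    _ = d (0, j) := key1 _ _
    _ = d (0, (↑(j : ℕ) : Fin n)) := by rw [Fin.cast_val_eq_self]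
    _ = d (0, 0) := key2 _

lemma aux_norm_sq {ι : Type*} [Fintype ι] (v : EuclideanSpace ℝ ι) :
    ‖v‖ ^ 2 = ∑ i, v i ^ 2 := by
  rw [EuclideanSpace.norm_eq, Real.sq_sqrt (by positivity)]
  simp [sq_abs]

-- sum ≤ card.sqrt * norm ; and norm ≤ sum for nonneg
lemma aux_le_of_sq (a b : ℝ) (ha : 0 ≤ a) (hb : 0 ≤ b) (h : a^2 ≤ b^2) : a ≤ b := by nlinarith

lemma aux_sum_le (ι : Type*) [Fintype ι] (v : EuclideanSpace ℝ ι) (hv : 0 ≤ ∑ i, v i) :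
    ∑ i, v i ≤ Real.sqrt (Fintype.card ι) * ‖v‖ := by
  apply aux_le_of_sq _ _ hv (by positivity)
  rw [mul_pow, Real.sq_sqrt (by positivity), aux_norm_sq]
  simpa using sq_sum_le_card_mul_sum_sq (s := Finset.univ) (f := fun i => v i)

lemma aux_norm_le_sum (ι : Type*) [Fintype ι] (v : EuclideanSpace ℝ ι) (hv : ∀ i, 0 ≤ v i) :
    ‖v‖ ≤ ∑ i, v i := by
  apply aux_le_of_sq _ _ (norm_nonneg _) (Finset.sum_nonneg fun i _ => hv i)
  rw [aux_norm_sq]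
  exact Finset.sum_sq_le_sq_sum_of_nonneg fun i _ => hv i

set_option maxHeartbeats 2000000 in
/-- the least squares functional with hypersurface-potential (smoothed total
variation) regularization, `J(x) = (1/2)‖Ax + b − y‖² + β Σ_{i,j} √(((𝒟x)_{ij})₁² +
((𝒟x)_{ij})₂² + δ²)` (periodic boundary conditions), is nonnegative, strictly convex and
coercive on the nonnegative orthant; hence `min_{x ≥ 0} J(x)` has a unique solution. -/
theorem ls_hs_nonneg_strictly_convex_coercive_unique_min
    (n : ℕ) [NeZero n]
    (A : Matrix (Fin n × Fin n) (Fin n × Fin n) ℝ)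
    (hA_nonneg : ∀ i j, 0 ≤ A i j)
    (hA_row : ∀ i, ∃ j, 0 < A i j)
    (hA_col : ∀ j, ∃ i, 0 < A i j)
    (b y : EuclideanSpace ℝ (Fin n × Fin n))
    (hb : ∀ i, 0 ≤ b i) (hy : ∀ i, 0 ≤ y i)
    (β δ : ℝ) (hβ : 0 < β) (hδ : 0 < δ)
    (J : EuclideanSpace ℝ (Fin n × Fin n) → ℝ)
    (hJ : ∀ x, J x =
      (1 / 2) * ‖(show EuclideanSpace ℝ (Fin n × Fin n) from WithLp.toLp 2 (A.mulVec x)) + b - y‖ ^ 2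
      + β * ∑ i : Fin n, ∑ j : Fin n,
          Real.sqrt ((x (i + 1, j) - x (i, j)) ^ 2 + (x (i, j + 1) - x (i, j)) ^ 2 + δ ^ 2)) :
    (∀ x : EuclideanSpace ℝ (Fin n × Fin n), (∀ i, 0 ≤ x i) → 0 ≤ J x) ∧
    StrictConvexOn ℝ {x : EuclideanSpace ℝ (Fin n × Fin n) | ∀ i, 0 ≤ x i} J ∧
    (∀ x : ℕ → EuclideanSpace ℝ (Fin n × Fin n), (∀ j i, 0 ≤ x j i) →
      Filter.Tendsto (fun j => ‖x j‖) Filter.atTop Filter.atTop →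
      Filter.Tendsto (fun j => J (x j)) Filter.atTop Filter.atTop) ∧
    (∃! xstar : EuclideanSpace ℝ (Fin n × Fin n), (∀ i, 0 ≤ xstar i) ∧
      ∀ x : EuclideanSpace ℝ (Fin n × Fin n), (∀ i, 0 ≤ x i) → J xstar ≤ J x) := by
  classical
  -- the linear map given by A
  set l : EuclideanSpace ℝ (Fin n × Fin n) →ₗ[ℝ] EuclideanSpace ℝ (Fin n × Fin n) :=
    { toFun := fun x => (show EuclideanSpace ℝ (Fin n × Fin n) from WithLp.toLp 2 (A.mulVec x))
      map_add' := fun x z => by simp [Matrix.mulVec_add]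
      map_smul' := fun c x => by simp [Matrix.mulVec_smul] } with hl
  have hl_apply : ∀ (x : EuclideanSpace ℝ (Fin n × Fin n)) (p : Fin n × Fin n), l x p = ∑ k, A p k * x k := by
    intro x p
    simp [hl, Matrix.mulVec, dotProduct]
  -- rewrite J using l and a single sum
  set gterm : EuclideanSpace ℝ (Fin n × Fin n) → Fin n × Fin n → ℝ := fun w q =>
    Real.sqrt ((w (q.1 + 1, q.2) - w (q.1, q.2)) ^ 2
      + (w (q.1, q.2 + 1) - w (q.1, q.2)) ^ 2 + δ ^ 2) with hgterm
  have hJ2 : ∀ w : EuclideanSpace ℝ (Fin n × Fin n), J w = (1/2) * ‖l w + b - y‖ ^ 2 + β * ∑ q : Fin n × Fin n, gterm w q := by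
    intro w
    rw [hJ w]
    congr 1
    congr 1
    exact (Fintype.sum_prod_type (fun q : Fin n × Fin n => gterm w q)).symm
  have hgterm_nonneg : ∀ (w : EuclideanSpace ℝ (Fin n × Fin n)) (q : Fin n × Fin n), 0 ≤ gterm w q :=
    fun w q => Real.sqrt_nonneg _
  -- Part 1 : nonnegativity
  have hnonneg : ∀ x : EuclideanSpace ℝ (Fin n × Fin n), (∀ i, 0 ≤ x i) → 0 ≤ J x := by
    intro x _
    rw [hJ2]
    have h1 : (0:ℝ) ≤ (1/2) * ‖l x + b - y‖ ^ 2 := by positivity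
    have h2 : (0:ℝ) ≤ ∑ q : Fin n × Fin n, gterm x q :=
      Finset.sum_nonneg fun q _ => hgterm_nonneg x q
    nlinarith
  -- Part 2 : strict convexity
  set S : Set (EuclideanSpace ℝ (Fin n × Fin n)) := {x : EuclideanSpace ℝ (Fin n × Fin n) | ∀ i, 0 ≤ x i} with hSdef
  have hSconv : Convex ℝ S := by
    intro x hx z hz t s ht hs hts
    intro i
    have h1 := hx i
    have h2 := hz i
    simp only [PiLp.add_apply, PiLp.smul_apply, smul_eq_mul]
    exact add_nonneg (mul_nonneg ht h1) (mul_nonneg hs h2)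
  have hstrict : StrictConvexOn ℝ S J := by
    refine ⟨hSconv, ?_⟩
    intro x hx z hz hxz t s ht hs hts
    simp only [smul_eq_mul]
    rw [hJ2, hJ2, hJ2]
    set m : EuclideanSpace ℝ (Fin n × Fin n) := t • x + s • z with hm
    have hmq : ∀ q : Fin n × Fin n, m q = t * x q + s * z q := by
      intro q; simp [hm, PiLp.add_apply, PiLp.smul_apply]
    have hmap : l m + b - y = t • (l x + b - y) + s • (l z + b - y) := by
      rw [hm, map_add, map_smul, map_smul]
      have hs1 : s = 1 - t := by linarith
      subst hs1
      module
    have hfsub : (l x + b - y) - (l z + b - y) = l x - l z := by abel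
    -- convexity of each gterm
    have hdiff1 : ∀ (w₁ w₂ : EuclideanSpace ℝ (Fin n × Fin n)) (q : Fin n × Fin n),
        (t • w₁ + s • w₂ : EuclideanSpace ℝ (Fin n × Fin n)) (q.1 + 1, q.2) - (t • w₁ + s • w₂ : EuclideanSpace ℝ (Fin n × Fin n)) (q.1, q.2)
          = t * (w₁ (q.1 + 1, q.2) - w₁ (q.1, q.2)) + s * (w₂ (q.1 + 1, q.2) - w₂ (q.1, q.2)) := by
      intro w₁ w₂ q
      simp only [PiLp.add_apply, PiLp.smul_apply, smul_eq_mul]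
      ring
    have hdiff2 : ∀ (w₁ w₂ : EuclideanSpace ℝ (Fin n × Fin n)) (q : Fin n × Fin n),
        (t • w₁ + s • w₂ : EuclideanSpace ℝ (Fin n × Fin n)) (q.1, q.2 + 1) - (t • w₁ + s • w₂ : EuclideanSpace ℝ (Fin n × Fin n)) (q.1, q.2)
          = t * (w₁ (q.1, q.2 + 1) - w₁ (q.1, q.2)) + s * (w₂ (q.1, q.2 + 1) - w₂ (q.1, q.2)) := by
      intro w₁ w₂ q
      simp only [PiLp.add_apply, PiLp.smul_apply, smul_eq_mul]
      ring
    have hgle : ∀ q : Fin n × Fin n, gterm m q ≤ t * gterm x q + s * gterm z q := by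
      intro q
      rw [hgterm]
      simp only
      rw [hm, hdiff1 x z q, hdiff2 x z q]
      exact aux_sqrt_le δ _ _ _ _ t s hδ ht.le hs.le hts
    by_cases hd : ∃ q : Fin n × Fin n,
        x (q.1 + 1, q.2) - x (q.1, q.2) ≠ z (q.1 + 1, q.2) - z (q.1, q.2) ∨
        x (q.1, q.2 + 1) - x (q.1, q.2) ≠ z (q.1, q.2 + 1) - z (q.1, q.2)
    · -- strictness from the TV-term
      obtain ⟨q₀, hq₀⟩ := hd
      have hg_lt : ∑ q : Fin n × Fin n, gterm m q
          < t * ∑ q : Fin n × Fin n, gterm x q + s * ∑ q : Fin n × Fin n, gterm z q := by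
        rw [Finset.mul_sum, Finset.mul_sum, ← Finset.sum_add_distrib]
        refine Finset.sum_lt_sum (fun q _ => hgle q) ⟨q₀, Finset.mem_univ _, ?_⟩
        rw [hgterm]
        simp only
        rw [hm, hdiff1 x z q₀, hdiff2 x z q₀]
        exact aux_sqrt_lt δ _ _ _ _ t s hδ ht hs hts hq₀
      have hf_le : ‖l m + b - y‖ ^ 2
          ≤ t * ‖l x + b - y‖ ^ 2 + s * ‖l z + b - y‖ ^ 2 := by
        rw [hmap, aux_combo _ _ t s hts]
        have h0 : 0 ≤ t * s * ‖(l x + b - y) - (l z + b - y)‖ ^ 2 := by positivity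
        linarith
      have hβg := mul_lt_mul_of_pos_left hg_lt hβ
      nlinarith
    · -- strictness from the least-squares term
      push_neg at hd
      set d : Fin n × Fin n → ℝ := fun p => x p - z p with hdd
      have h1 : ∀ i j : Fin n, d (i + 1, j) = d (i, j) := by
        intro i j
        have := (hd (i, j)).1
        simp only [hdd]
        simp only at this
        linarith
      have h2 : ∀ i j : Fin n, d (i, j + 1) = d (i, j) := by
        intro i j
        have := (hd (i, j)).2
        simp only [hdd]
        simp only at this
        linarith
      have hconst := aux_const n d h1 h2
      set cst : ℝ := d (0, 0) with hcst
      have hcst_ne : cst ≠ 0 := by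
        intro h0
        apply hxz
        ext p
        have := hconst p
        rw [h0] at this
        have : x p - z p = 0 := this
        linarith
      have hrow : 0 < ∑ k, A (0, 0) k := by
        obtain ⟨k₀, hk₀⟩ := hA_row (0, 0)
        exact Finset.sum_pos' (fun k _ => hA_nonneg _ k) ⟨k₀, Finset.mem_univ _, hk₀⟩
      have hlxz : l x - l z ≠ 0 := by
        intro h0
        have hcoord : (l x - l z) ((0 : Fin n), (0 : Fin n)) = 0 := by rw [h0]; rfl
        rw [PiLp.sub_apply, hl_apply, hl_apply, ← Finset.sum_sub_distrib] at hcoord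
        have : ∑ k, (A (0,0) k * x k - A (0,0) k * z k) = (∑ k, A (0,0) k) * cst := by
          rw [Finset.sum_mul]
          refine Finset.sum_congr rfl fun k _ => ?_
          have := hconst k
          have hk : x k - z k = cst := this
          linear_combination (A (0,0) k) * hk
        rw [this] at hcoord
        exact hcst_ne (by
          rcases mul_eq_zero.1 hcoord with h | h
          · exact absurd h (ne_of_gt hrow)
          · exact h)
      have hnorm_pos : 0 < ‖(l x + b - y) - (l z + b - y)‖ := by
        rw [hfsub]
        exact norm_pos_iff.2 hlxz
      have hf_lt : ‖l m + b - y‖ ^ 2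
          < t * ‖l x + b - y‖ ^ 2 + s * ‖l z + b - y‖ ^ 2 := by
        rw [hmap, aux_combo _ _ t s hts]
        have h0 : 0 < t * s * ‖(l x + b - y) - (l z + b - y)‖ ^ 2 := by positivity
        linarith
      have hg_le : ∑ q : Fin n × Fin n, gterm m q
          ≤ t * ∑ q : Fin n × Fin n, gterm x q + s * ∑ q : Fin n × Fin n, gterm z q := by
        rw [Finset.mul_sum, Finset.mul_sum, ← Finset.sum_add_distrib]
        exact Finset.sum_le_sum fun q _ => hgle q
      have hβg := mul_le_mul_of_nonneg_left hg_le hβ.le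
      nlinarith
  -- pointwise coercivity estimate
  have hNpos : (0:ℝ) < n := by
    have := Nat.pos_of_ne_zero (NeZero.ne n)
    exact_mod_cast this
  set c : ℝ := Finset.univ.inf' Finset.univ_nonempty (fun k : Fin n × Fin n => ∑ i, A i k) with hc
  have hcpos : 0 < c := by
    rw [hc, Finset.lt_inf'_iff]
    intro k _
    obtain ⟨i₀, hi₀⟩ := hA_col k
    exact Finset.sum_pos' (fun i _ => hA_nonneg i k) ⟨i₀, Finset.mem_univ _, hi₀⟩
  set a : ℝ := c / n with ha
  have hapos : 0 < a := div_pos hcpos hNpos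
  set C : ℝ := ‖b - y‖ with hC
  have hCnn : 0 ≤ C := norm_nonneg _
  have hlow : ∀ x : EuclideanSpace ℝ (Fin n × Fin n), (∀ i, 0 ≤ x i) → a * ‖x‖ - C ≤ ‖l x + b - y‖ := by
    intro x hx
    have hstep1 : c * ∑ k, x k ≤ ∑ p, l x p := by
      have e : ∑ p, l x p = ∑ k, (∑ i, A i k) * x k := by
        simp only [hl_apply]
        rw [Finset.sum_comm]
        simp [Finset.sum_mul]
      rw [e, Finset.mul_sum]
      refine Finset.sum_le_sum fun k _ => ?_
      exact mul_le_mul_of_nonneg_right (Finset.inf'_le _ (Finset.mem_univ k)) (hx k)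
    have hlx_nonneg : ∀ p, 0 ≤ l x p := by
      intro p
      rw [hl_apply]
      exact Finset.sum_nonneg fun k _ => mul_nonneg (hA_nonneg p k) (hx k)
    have hstep2 : ∑ p, l x p ≤ (n : ℝ) * ‖l x‖ := by
      have := aux_sum_le (Fin n × Fin n) (l x) (Finset.sum_nonneg fun p _ => hlx_nonneg p)
      have hcard : Real.sqrt (Fintype.card (Fin n × Fin n)) = (n : ℝ) := by
        rw [Fintype.card_prod, Fintype.card_fin]
        push_cast
        rw [show ((n : ℝ) * n) = (n:ℝ)^2 by ring, Real.sqrt_sq hNpos.le]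
      rwa [hcard] at this
    have hstep3 : ‖x‖ ≤ ∑ k, x k := aux_norm_le_sum (Fin n × Fin n) x hx
    have hkey : a * ‖x‖ ≤ ‖l x‖ := by
      rw [ha, div_mul_eq_mul_div, div_le_iff₀ hNpos]
      calc c * ‖x‖ ≤ c * ∑ k, x k := mul_le_mul_of_nonneg_left hstep3 hcpos.le
        _ ≤ ∑ p, l x p := hstep1
        _ ≤ (n:ℝ) * ‖l x‖ := hstep2
        _ = ‖l x‖ * n := by ring
    have htri : ‖l x‖ ≤ ‖l x + b - y‖ + C := by
      rw [hC]
      have e : l x = (l x + b - y) - (b - y) := by abel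
      calc ‖l x‖ = ‖(l x + b - y) - (b - y)‖ := by rw [← e]
        _ ≤ ‖l x + b - y‖ + ‖b - y‖ := norm_sub_le _ _
    linarith
  have hJge : ∀ x : EuclideanSpace ℝ (Fin n × Fin n), (1/2) * ‖l x + b - y‖ ^ 2 ≤ J x := by
    intro x
    rw [hJ2]
    have h2 : (0:ℝ) ≤ ∑ q : Fin n × Fin n, gterm x q :=
      Finset.sum_nonneg fun q _ => hgterm_nonneg x q
    nlinarith
  -- Part 3 : coercivity for sequences
  have hcoercive : ∀ x : ℕ → EuclideanSpace ℝ (Fin n × Fin n), (∀ j i, 0 ≤ x j i) →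
      Filter.Tendsto (fun j => ‖x j‖) Filter.atTop Filter.atTop →
      Filter.Tendsto (fun j => J (x j)) Filter.atTop Filter.atTop := by
    intro x hx hxn
    have step1 : Filter.Tendsto (fun j => a * ‖x j‖ - C) Filter.atTop Filter.atTop := by
      have := (hxn.const_mul_atTop hapos)
      simpa [sub_eq_add_neg] using Filter.tendsto_atTop_add_const_right _ (-C) this
    have step2 : Filter.Tendsto (fun j => (1/2) * (a * ‖x j‖ - C) ^ 2) Filter.atTop Filter.atTop := by
      have hp : Filter.Tendsto (fun r : ℝ => r ^ 2) Filter.atTop Filter.atTop :=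
        Filter.tendsto_pow_atTop two_ne_zero
      exact (hp.comp step1).const_mul_atTop (by norm_num)
    refine Filter.tendsto_atTop_mono' Filter.atTop ?_ step2
    filter_upwards [hxn.eventually_ge_atTop (C / a)] with j hj
    have h0 : 0 ≤ a * ‖x j‖ - C := by
      have := (div_le_iff₀ hapos).1 hj
      linarith
    have hle := hlow (x j) (hx j)
    calc (1/2) * (a * ‖x j‖ - C) ^ 2
        ≤ (1/2) * ‖l (x j) + b - y‖ ^ 2 := by
          have := pow_le_pow_left₀ h0 hle 2
          linarith
      _ ≤ J (x j) := hJge (x j)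
  -- Part 4 : existence and uniqueness of the minimizer
  have hcoord_cont : ∀ q : Fin n × Fin n, Continuous fun x : EuclideanSpace ℝ (Fin n × Fin n) => x q :=
    fun q => (EuclideanSpace.proj (𝕜 := ℝ) q).continuous
  have hJcont : Continuous J := by
    have hJeq : J = fun w => (1/2) * ‖l w + b - y‖ ^ 2 + β * ∑ q : Fin n × Fin n, gterm w q :=
      funext hJ2
    rw [hJeq]
    have hlc : Continuous fun w : EuclideanSpace ℝ (Fin n × Fin n) => l w := l.continuous_of_finiteDimensional
    have h1 : Continuous fun w : EuclideanSpace ℝ (Fin n × Fin n) => (1/2) * ‖l w + b - y‖ ^ 2 :=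
      continuous_const.mul ((((hlc.add continuous_const).sub continuous_const).norm).pow 2)
    have h2 : Continuous fun w : EuclideanSpace ℝ (Fin n × Fin n) => ∑ q : Fin n × Fin n, gterm w q := by
      refine continuous_finset_sum _ fun q _ => ?_
      rw [hgterm]
      exact Real.continuous_sqrt.comp (by fun_prop)
    exact h1.add (continuous_const.mul h2)
  have hSclosed : IsClosed S := by
    have : S = ⋂ q : Fin n × Fin n, {x : EuclideanSpace ℝ (Fin n × Fin n) | 0 ≤ x q} := by
      ext x; simp [hSdef, Set.mem_iInter]
    rw [this]
    exact isClosed_iInter fun q => isClosed_le continuous_const (hcoord_cont q)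
  have h0S : (0 : EuclideanSpace ℝ (Fin n × Fin n)) ∈ S := by
    intro i
    simp
  have hJ0 : 0 ≤ J 0 := hnonneg 0 h0S
  set R : ℝ := (C + Real.sqrt (2 * J 0) + 1) / a with hR
  have hRpos : 0 < R := by
    apply div_pos _ hapos
    have := Real.sqrt_nonneg (2 * J 0)
    linarith
  set K : Set (EuclideanSpace ℝ (Fin n × Fin n)) := S ∩ Metric.closedBall 0 R with hK
  have hKcompact : IsCompact K := (isCompact_closedBall (0:EuclideanSpace ℝ (Fin n × Fin n)) R).inter_left hSclosed
  have h0K : (0 : EuclideanSpace ℝ (Fin n × Fin n)) ∈ K := ⟨h0S, by simp [Metric.mem_closedBall, hRpos.le]⟩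
  obtain ⟨x₀, hx₀K, hx₀min⟩ := hKcompact.exists_isMinOn ⟨0, h0K⟩ hJcont.continuousOn
  have hx₀S : x₀ ∈ S := hx₀K.1
  have hglobal : ∀ x ∈ S, J x₀ ≤ J x := by
    intro x hxS
    by_cases hxR : ‖x‖ ≤ R
    · exact hx₀min ⟨hxS, by simpa [Metric.mem_closedBall] using hxR⟩
    · push_neg at hxR
      have haR : a * R = C + Real.sqrt (2 * J 0) + 1 := by
        rw [hR, mul_div_cancel₀ _ (ne_of_gt hapos)]
      have h1 : C + Real.sqrt (2 * J 0) + 1 < a * ‖x‖ := by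
        rw [← haR]
        exact mul_lt_mul_of_pos_left hxR hapos
      have hs0 : 0 ≤ Real.sqrt (2 * J 0) := Real.sqrt_nonneg _
      have h2 : Real.sqrt (2 * J 0) + 1 ≤ a * ‖x‖ - C := by linarith
      have h3 : (Real.sqrt (2 * J 0) + 1) ^ 2 ≤ (a * ‖x‖ - C) ^ 2 :=
        pow_le_pow_left₀ (by linarith) h2 2
      have h4 : Real.sqrt (2 * J 0) ^ 2 = 2 * J 0 := Real.sq_sqrt (by linarith)
      have h5 : J 0 ≤ (1/2) * (a * ‖x‖ - C) ^ 2 := by nlinarith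
      have h6 : (1/2) * (a * ‖x‖ - C) ^ 2 ≤ (1/2) * ‖l x + b - y‖ ^ 2 := by
        have hle := hlow x hxS
        have h0 : 0 ≤ a * ‖x‖ - C := by linarith
        have := pow_le_pow_left₀ h0 hle 2
        linarith
      have h7 : J x₀ ≤ J 0 := hx₀min h0K
      have h8 := hJge x
      linarith
  refine ⟨hnonneg, hstrict, hcoercive, ⟨x₀, ⟨hx₀S, hglobal⟩, ?_⟩⟩
  rintro w ⟨hwS, hwmin⟩
  by_contra hne
  have hJeq : J w = J x₀ := le_antisymm (hwmin x₀ hx₀S) (hglobal w hwS)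
  have hmidS : ((1/2 : ℝ)) • w + ((1/2 : ℝ)) • x₀ ∈ S :=
    hSconv hwS hx₀S (by norm_num) (by norm_num) (by norm_num)
  have hlt := hstrict.2 hwS hx₀S hne (by norm_num : (0:ℝ) < 1/2) (by norm_num : (0:ℝ) < 1/2)
    (by norm_num)
  simp only [smul_eq_mul] at hlt
  have hge := hglobal _ hmidS
  rw [hJeq] at hlt
  have : J x₀ ≤ J ((1/2 : ℝ) • w + (1/2 : ℝ) • x₀) := hge
  nlinarith [hlt, this]
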